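/- The number of non-representable positive integers satisfies S₀ = (1/a)·∑_{n ∈ N} n − (a−1)/2 = ∑_{n ∈ N} ⌊n/a⌋, where ⌊·⌋ is the floor function. -/

import Mathlib

open Finset in
lemma bezout_aux (k : ℕ) (a : Fin k → ℕ) (hgcd : Finset.univ.gcd a = 1) :
    ∃ c : Fin k → ℤ, ∑ i, c i * (a i : ℤ) = 1 := by
  classical
  let T : AddSubgroup ℤ :=
  { carrier := {z | ∃ c : Fin k → ℤ, z = ∑ i, c i * (a i : ℤ)}
    zero_mem' := ⟨0, by simp⟩
    add_mem' := by
      rintro x y ⟨c, rfl⟩ ⟨d, rfl⟩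
      exact ⟨c + d, by simp [add_mul, Finset.sum_add_distrib]⟩
    neg_mem' := by
      rintro x ⟨c, rfl⟩
      exact ⟨-c, by simp [← Finset.sum_neg_distrib]⟩ }
  have hone : (1 : ℤ) ∈ T := by
    obtain ⟨g, hg⟩ := Int.subgroup_cyclic (AddSubgroup.closure (Set.range fun i => (a i : ℤ)))
    have hdvd : ∀ i, g ∣ (a i : ℤ) := by
      intro i
      have hmem : (a i : ℤ) ∈ AddSubgroup.closure (Set.range fun i => (a i : ℤ)) :=
        AddSubgroup.subset_closure ⟨i, rfl⟩
      rw [hg, AddSubgroup.mem_closure_singleton] at hmem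
      obtain ⟨n, hn⟩ := hmem
      exact Dvd.intro_left n (by rw [← hn]; simp [zsmul_eq_mul])
    have hgnat : g.natAbs = 1 := by
      rw [← Nat.dvd_one, ← hgcd]
      refine Finset.dvd_gcd fun i _ => ?_
      have := Int.natAbs_dvd_natAbs.mpr (hdvd i)
      simpa using this
    have hclos : AddSubgroup.closure (Set.range fun i => (a i : ℤ)) ≤ T := by
      rw [AddSubgroup.closure_le]
      rintro z ⟨i, rfl⟩
      exact ⟨fun j => if j = i then 1 else 0, by simp⟩
    rcases Int.natAbs_eq_iff.mp hgnat with h | h <;>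
    · refine hclos ?_
      rw [hg, h]
      first
      | exact AddSubgroup.mem_closure_singleton_self _
      | simpa using neg_mem (AddSubgroup.mem_closure_singleton_self (-1 : ℤ))
  exact ⟨hone.choose, hone.choose_spec.symm⟩


open Finset in
lemma residue_aux (k : ℕ) (a : Fin k → ℕ) (hgcd : Finset.univ.gcd a = 1)
    (A : ℕ) (hA : 0 < A) (r : ℕ) :
    ∃ x : Fin k → ℕ, (∑ i, a i * x i) % A = r % A := by
  obtain ⟨c, hc⟩ := bezout_aux k a hgcd
  have hA' : (A : ℤ) ≠ 0 := by exact_mod_cast hA.ne'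
  refine ⟨fun i => ((c i * r) % (A:ℤ)).toNat, ?_⟩
  have hx : ∀ i, ((((c i * r) % (A:ℤ)).toNat : ℕ) : ℤ) = (c i * r) % (A:ℤ) := fun i =>
    Int.toNat_of_nonneg (Int.emod_nonneg _ hA')
  have hdvd : (A:ℤ) ∣ (r : ℤ) - ∑ i, (a i : ℤ) * ((c i * r) % (A:ℤ)) := by
    have key : (r : ℤ) - ∑ i, (a i : ℤ) * ((c i * r) % (A:ℤ))
        = ∑ i, (a i : ℤ) * (c i * r - (c i * r) % (A:ℤ)) := by
      have h1 : ∑ i, (a i : ℤ) * (c i * r) = (r : ℤ) := by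
        have : ∑ i, (a i : ℤ) * (c i * r) = (∑ i, c i * (a i : ℤ)) * r := by
          rw [Finset.sum_mul]; exact Finset.sum_congr rfl fun i _ => by ring
        rw [this, hc, one_mul]
      calc (r : ℤ) - ∑ i, (a i : ℤ) * ((c i * r) % (A:ℤ))
          = ∑ i, (a i : ℤ) * (c i * r) - ∑ i, (a i : ℤ) * ((c i * r) % (A:ℤ)) := by rw [h1]
        _ = ∑ i, ((a i : ℤ) * (c i * r) - (a i : ℤ) * ((c i * r) % (A:ℤ))) := by
            rw [Finset.sum_sub_distrib]
        _ = ∑ i, (a i : ℤ) * (c i * r - (c i * r) % (A:ℤ)) := by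
            exact Finset.sum_congr rfl fun i _ => by ring
    rw [key]
    refine Finset.dvd_sum fun i _ => Dvd.dvd.mul_left ?_ _
    exact ⟨(c i * r) / A, by rw [Int.emod_def]; ring⟩
  have hmod : ((∑ i, a i * ((c i * r) % (A:ℤ)).toNat : ℕ) : ℤ) % (A:ℤ) = (r : ℤ) % (A:ℤ) := by
    have hcast : ((∑ i, a i * ((c i * r) % (A:ℤ)).toNat : ℕ) : ℤ)
        = ∑ i, (a i : ℤ) * ((c i * r) % (A:ℤ)) := by
      push_cast
      exact Finset.sum_congr rfl fun i _ => by rw [hx i]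
    rw [hcast]
    exact Int.modEq_iff_dvd.mpr hdvd
  rw [← Int.natCast_mod, ← Int.natCast_mod] at hmod
  exact_mod_cast hmod

/-- Equation (3.2): the number of non-representable positive integers satisfies
`S₀ = (1/a)·∑_{n ∈ N} n − (a−1)/2 = ∑_{n ∈ N} ⌊n/a⌋`. -/


theorem card_NR_eq
    (k : ℕ) (a : Fin k → ℕ) (ha : ∀ i, 0 < a i)
    (hgcd : Finset.univ.gcd a = 1)
    (A : ℕ) (hA : 2 ≤ A) (hAmem : ∃ i, a i = A)
    (NR N : Finset ℕ)
    (hNR : ∀ n : ℕ, n ∈ NR ↔ 0 < n ∧ ¬ ∃ x : Fin k → ℕ, n = ∑ i, a i * x i)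
    (hN : ∀ n : ℕ, n ∈ N ↔ 0 < n ∧ (∃ x : Fin k → ℕ, n = ∑ i, a i * x i) ∧
      ¬ ∃ x : Fin k → ℕ, (n : ℤ) - (A : ℤ) = ∑ i, (a i : ℤ) * (x i : ℤ)) :
    (NR.card : ℚ) = (1 / (A : ℚ)) * ∑ n ∈ N, (n : ℚ) - ((A : ℚ) - 1) / 2 ∧
    (NR.card : ℚ) = ∑ n ∈ N, (⌊(n : ℚ) / (A : ℚ)⌋ : ℚ) := by
  classical
  obtain ⟨i0, hi0⟩ := hAmem
  have hA0 : 0 < A := by omega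
  set Rep : ℕ → Prop := fun n => ∃ x : Fin k → ℕ, n = ∑ i, a i * x i with hRepdef
  have rep0 : Rep 0 := ⟨fun _ => 0, by simp⟩
  have repA : Rep A := ⟨fun j => if j = i0 then 1 else 0, by
    simp [mul_ite, Finset.sum_ite_eq', hi0]⟩
  have repAdd : ∀ m n, Rep m → Rep n → Rep (m + n) := by
    rintro m n ⟨x, rfl⟩ ⟨y, rfl⟩
    exact ⟨x + y, by simp [mul_add, Finset.sum_add_distrib]⟩
  have repAddMulA : ∀ (j m : ℕ), Rep m → Rep (m + A * j) := by
    intro j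
    induction j with
    | zero => intro m h; simpa using h
    | succ j ih =>
        intro m h
        have : m + A * (j + 1) = (m + A * j) + A := by ring
        rw [this]
        exact repAdd _ _ (ih m h) repA
  have hres : ∀ r : ℕ, ∃ n, Rep n ∧ n % A = r % A := by
    intro r
    obtain ⟨x, hx⟩ := residue_aux k a hgcd A hA0 r
    exact ⟨∑ i, a i * x i, ⟨x, rfl⟩, hx⟩
  set w : ℕ → ℕ := fun r => Nat.find (hres r) with hwdef
  have hw : ∀ r, Rep (w r) ∧ w r % A = r % A := fun r => Nat.find_spec (hres r)
  have hwmin : ∀ r n, Rep n → n % A = r % A → w r ≤ n :=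
    fun r n h1 h2 => Nat.find_min' (hres r) ⟨h1, h2⟩
  have hrep_iff : ∀ n, Rep n ↔ w (n % A) ≤ n := by
    intro n
    constructor
    · intro h
      exact hwmin _ n h (Nat.mod_mod_of_dvd n dvd_rfl).symm
    · intro hle
      have hmod : w (n % A) % A = n % A := by
        rw [(hw (n % A)).2, Nat.mod_mod_of_dvd n dvd_rfl]
      have hdvd : A ∣ n - w (n % A) := (Nat.modEq_iff_dvd' hle).mp hmod
      obtain ⟨j, hj⟩ := hdvd
      have hn : n = w (n % A) + A * j := by omega
      rw [hn]
      exact repAddMulA j _ (hw _).1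
  have w0 : w 0 = 0 := Nat.le_zero.mp (hwmin 0 0 rep0 rfl)
  have hNR' : ∀ n, n ∈ NR ↔ 0 < n ∧ n < w (n % A) := by
    intro n
    rw [hNR n]
    exact and_congr_right fun _ => (not_congr (hrep_iff n)).trans not_le
  have hsub : ∀ n : ℕ,
      (∃ x : Fin k → ℕ, (n : ℤ) - (A : ℤ) = ∑ i, (a i : ℤ) * (x i : ℤ)) ↔
      (A ≤ n ∧ Rep (n - A)) := by
    intro n
    constructor
    · rintro ⟨x, hx⟩
      have h0 : (0 : ℤ) ≤ ∑ i, (a i : ℤ) * (x i : ℤ) :=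
        Finset.sum_nonneg fun i _ => by positivity
      have hAn : A ≤ n := by
        have : (A : ℤ) ≤ (n : ℤ) := by omega
        exact_mod_cast this
      refine ⟨hAn, ⟨x, ?_⟩⟩
      have h2 : ((n - A : ℕ) : ℤ) = ((∑ i, a i * x i : ℕ) : ℤ) := by
        rw [Nat.cast_sub hAn]
        push_cast
        exact hx
      exact_mod_cast h2
    · rintro ⟨hAn, x, hx⟩
      refine ⟨x, ?_⟩
      have h2 : ((n - A : ℕ) : ℤ) = ((∑ i, a i * x i : ℕ) : ℤ) := congrArg (fun m : ℕ => (m : ℤ)) hx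
      rw [Nat.cast_sub hAn] at h2
      push_cast at h2
      exact h2
  have hNmem : ∀ n, n ∈ N ↔ ∃ r ∈ Finset.Ico 1 A, w r = n := by
    intro n
    rw [hN n]
    constructor
    · rintro ⟨hn, hrep, hnot⟩
      have hle : w (n % A) ≤ n := (hrep_iff n).mp hrep
      have hmodeq : w (n % A) % A = n % A := by
        rw [(hw _).2, Nat.mod_mod_of_dvd n dvd_rfl]
      have heq : n = w (n % A) := by
        by_contra hne
        have hlt : w (n % A) < n := lt_of_le_of_ne hle (Ne.symm hne)
        have hdvd : A ∣ n - w (n % A) := (Nat.modEq_iff_dvd' hle).mp hmodeq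
        obtain ⟨j, hj⟩ := hdvd
        have hj0 : 1 ≤ j := by
          rcases Nat.eq_zero_or_pos j with rfl | h
          · omega
          · exact h
        have hstep : w (n % A) + A ≤ n := by
          have : A * 1 ≤ A * j := Nat.mul_le_mul_left A hj0
          omega
        have hAn : A ≤ n := by omega
        have hrepsub : Rep (n - A) := by
          rw [hrep_iff]
          have hmm : (n - A) % A = n % A := by
            conv_rhs => rw [← Nat.sub_add_cancel hAn]
            rw [Nat.add_mod_right]
          rw [hmm]
          omega
        exact hnot ((hsub n).mpr ⟨hAn, hrepsub⟩)
      have hr1 : 1 ≤ n % A := by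
        by_contra h
        have h0 : n % A = 0 := by omega
        rw [h0, w0] at heq
        omega
      exact ⟨n % A, Finset.mem_Ico.mpr ⟨hr1, Nat.mod_lt n hA0⟩, heq.symm⟩
    · rintro ⟨r, hr, rfl⟩
      rw [Finset.mem_Ico] at hr
      have hwmod : w r % A = r := by rw [(hw r).2, Nat.mod_eq_of_lt hr.2]
      have hpos : 0 < w r := by
        rcases Nat.eq_zero_or_pos (w r) with h | h
        · rw [h] at hwmod
          simp at hwmod
          omega
        · exact h
      refine ⟨hpos, (hw r).1, ?_⟩
      rw [hsub (w r)]
      rintro ⟨hAw, hrepsub⟩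
      have hmm : (w r - A) % A = r := by
        conv_lhs => rw [show w r - A = w r - A from rfl]
        have : (w r - A) % A = w r % A := by
          conv_rhs => rw [← Nat.sub_add_cancel hAw]
          rw [Nat.add_mod_right]
        rw [this, hwmod]
      have hcontra : w r ≤ w r - A := hwmin r _ hrepsub (by rw [hmm, Nat.mod_eq_of_lt hr.2])
      omega
  have hNimg : N = (Finset.Ico 1 A).image w := by
    ext n
    rw [hNmem n, Finset.mem_image]
  have winj : ∀ r ∈ Finset.Ico 1 A, ∀ s ∈ Finset.Ico 1 A, w r = w s → r = s := by
    intro r hr s hs h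
    rw [Finset.mem_Ico] at hr hs
    have h1 : w r % A = r := by rw [(hw r).2, Nat.mod_eq_of_lt hr.2]
    have h2 : w s % A = s := by rw [(hw s).2, Nat.mod_eq_of_lt hs.2]
    rw [← h1, ← h2, h]
  have hNReq : NR = (Finset.Ico 1 A).biUnion
      (fun r => (Finset.range (w r / A)).image (fun j => A * j + r)) := by
    ext n
    rw [hNR', Finset.mem_biUnion]
    constructor
    · rintro ⟨hn, hlt⟩
      have hrA : n % A < A := Nat.mod_lt n hA0
      have hr1 : 1 ≤ n % A := by
        by_contra h
        have h0 : n % A = 0 := by omega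
        rw [h0, w0] at hlt
        omega
      refine ⟨n % A, Finset.mem_Ico.mpr ⟨hr1, hrA⟩, Finset.mem_image.mpr ⟨n / A, ?_, ?_⟩⟩
      · rw [Finset.mem_range]
        have hwm : w (n % A) % A = n % A := by
          rw [(hw _).2, Nat.mod_mod_of_dvd n dvd_rfl]
        have e1 : A * (n / A) + n % A = n := Nat.div_add_mod n A
        have e2 : A * (w (n % A) / A) + n % A = w (n % A) := by
          conv_rhs => rw [← Nat.div_add_mod (w (n % A)) A]
          rw [hwm]
        have hmul : A * (n / A) + n % A < A * (w (n % A) / A) + n % A := by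
          rw [e1, e2]; exact hlt
        exact Nat.lt_of_mul_lt_mul_left (lt_of_add_lt_add_right hmul)
      · have e1 : A * (n / A) + n % A = n := Nat.div_add_mod n A
        exact e1
    · rintro ⟨r, hr, hmem⟩
      rw [Finset.mem_image] at hmem
      obtain ⟨j, hj, rfl⟩ := hmem
      rw [Finset.mem_range] at hj
      rw [Finset.mem_Ico] at hr
      have hmod : (A * j + r) % A = r := by rw [Nat.mul_add_mod, Nat.mod_eq_of_lt hr.2]
      refine ⟨Nat.lt_of_lt_of_le hr.1 (Nat.le_add_left r (A * j)), ?_⟩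
      rw [hmod]
      have e2 : A * (w r / A) + r = w r := by
        conv_rhs => rw [← Nat.div_add_mod (w r) A]
        rw [(hw r).2, Nat.mod_eq_of_lt hr.2]
      have hmul : A * j < A * (w r / A) := by
        have h := Nat.mul_le_mul_left A (Nat.succ_le_of_lt hj)
        rw [Nat.mul_succ] at h
        omega
      calc A * j + r < A * (w r / A) + r := Nat.add_lt_add_right hmul r
        _ = w r := e2
  have hcard : NR.card = ∑ r ∈ Finset.Ico 1 A, w r / A := by
    rw [hNReq, Finset.card_biUnion]
    · refine Finset.sum_congr rfl fun r hr => ?_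
      rw [Finset.card_image_of_injective _ fun j1 j2 h => ?_, Finset.card_range]
      have h' : A * j1 = A * j2 := Nat.add_right_cancel h
      exact Nat.eq_of_mul_eq_mul_left hA0 h'
    · intro r hr s hs hrs
      rw [Function.onFun, Finset.disjoint_left]
      intro n hn hn'
      rw [Finset.mem_image] at hn hn'
      obtain ⟨j1, _, rfl⟩ := hn
      obtain ⟨j2, _, he⟩ := hn'
      rw [Finset.mem_coe, Finset.mem_Ico] at hr hs
      apply hrs
      have m1 : (A * j1 + r) % A = r := by rw [Nat.mul_add_mod, Nat.mod_eq_of_lt hr.2]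
      have m2 : (A * j2 + s) % A = s := by rw [Nat.mul_add_mod, Nat.mod_eq_of_lt hs.2]
      rw [← m1, ← he, m2]
  have hsumN : ∀ f : ℕ → ℚ, ∑ n ∈ N, f n = ∑ r ∈ Finset.Ico 1 A, f (w r) := by
    intro f
    rw [hNimg]
    exact Finset.sum_image winj
  have hAq : (A : ℚ) ≠ 0 := Nat.cast_ne_zero.mpr hA0.ne'
  have hfloor : ∀ r ∈ Finset.Ico 1 A, (⌊(w r : ℚ) / (A : ℚ)⌋ : ℚ) = ((w r / A : ℕ) : ℚ) := by
    intro r _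
    rw [Rat.floor_natCast_div_natCast]
    norm_cast
  have h2 : (NR.card : ℚ) = ∑ n ∈ N, (⌊(n : ℚ) / (A : ℚ)⌋ : ℚ) := by
    rw [hsumN (fun n => (⌊(n : ℚ) / (A : ℚ)⌋ : ℚ)), Finset.sum_congr rfl hfloor, hcard]
    push_cast
    rfl
  refine ⟨?_, h2⟩
  -- Gauss sum
  have hIco : Finset.Ico 1 A = (Finset.range A).erase 0 := by
    ext x
    simp only [Finset.mem_Ico, Finset.mem_erase, Finset.mem_range]
    omega
  have hGnat : (∑ r ∈ Finset.range A, r) * 2 = A * (A - 1) := Finset.sum_range_id_mul_two A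
  have hG : ∑ r ∈ Finset.Ico 1 A, (r : ℚ) = (A : ℚ) * ((A : ℚ) - 1) / 2 := by
    have hq : (∑ r ∈ Finset.range A, (r : ℚ)) * 2 = (A : ℚ) * ((A : ℚ) - 1) := by
      have hc := congrArg (fun m : ℕ => (m : ℚ)) hGnat
      push_cast [Nat.cast_sub (by omega : 1 ≤ A)] at hc
      convert hc using 2
    have hsplit : ∑ r ∈ Finset.Ico 1 A, (r : ℚ) = ∑ r ∈ Finset.range A, (r : ℚ) := by
      rw [hIco]
      exact Finset.sum_erase _ (by norm_num)
    rw [hsplit]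
    linarith
  have hwdecomp : ∀ r ∈ Finset.Ico 1 A, (w r : ℚ) = (A : ℚ) * ((w r / A : ℕ) : ℚ) + (r : ℚ) := by
    intro r hr
    rw [Finset.mem_Ico] at hr
    have e2 : A * (w r / A) + r = w r := by
      conv_rhs => rw [← Nat.div_add_mod (w r) A]
      rw [(hw r).2, Nat.mod_eq_of_lt hr.2]
    exact_mod_cast (congrArg (fun m : ℕ => (m : ℚ)) e2).symm
  have hsum1 : ∑ n ∈ N, (n : ℚ) = (A : ℚ) * (NR.card : ℚ) + (A : ℚ) * ((A : ℚ) - 1) / 2 := by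
    rw [hsumN (fun n => (n : ℚ)), Finset.sum_congr rfl hwdecomp, Finset.sum_add_distrib,
      ← Finset.mul_sum, hG, hcard]
    push_cast
    ring
  rw [hsum1]
  field_simp
  ring
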